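/- Let Φ be a unique-sink orientation of the n-cube with global sink t, and let v be any vertex at Hamming distance k from t. Then Φ contains a directed path of length exactly k from v to t. -/

import Mathlib

/-- Flip coordinate `i` of a cube vertex. -/
def cflip {n : ℕ} (v : Fin n → Bool) (i : Fin n) : Fin n → Bool :=
  fun j => if j = i then !v j else v j

/-- `Φ v i = true` means the edge between `v` and `v ⊕ i` is incoming at `v` (sign `+`);
`Φ v i = false` means it is outgoing at `v` (sign `-`). Consistency says the two
endpoints of an edge agree about its direction. -/
def Consistent {n : ℕ} (Φ : (Fin n → Bool) → Fin n → Bool) : Prop :=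
  ∀ v i, Φ (cflip v i) i ≠ Φ v i

/-- `w` lies in the subcube spanned from `u` by the coordinate set `C`. -/
def InSubcube {n : ℕ} (u : Fin n → Bool) (C : Finset (Fin n)) (w : Fin n → Bool) : Prop :=
  ∀ j ∉ C, w j = u j

/-- Every (nonempty) subcube has a unique sink. -/
def HasUniqueSinks {n : ℕ} (Φ : (Fin n → Bool) → Fin n → Bool) : Prop :=
  ∀ (u : Fin n → Bool) (C : Finset (Fin n)),
    ∃! w, InSubcube u C w ∧ ∀ i ∈ C, Φ w i = true

/-- A unique-sink orientation of the `n`-cube. -/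
def IsUSO {n : ℕ} (Φ : (Fin n → Bool) → Fin n → Bool) : Prop :=
  Consistent Φ ∧ HasUniqueSinks Φ

/-- Directed edge relation of the orientation: `v → u`. -/
def Step {n : ℕ} (Φ : (Fin n → Bool) → Fin n → Bool) (v u : Fin n → Bool) : Prop :=
  ∃ i, Φ v i = false ∧ u = cflip v i

/-- in a USO with global sink `t`, from any vertex `v` at Hamming
distance `k` from `t` there is a directed path of length exactly `k` to `t`. -/
theorem uso_short_path_to_sink {n : ℕ} (Φ : (Fin n → Bool) → Fin n → Bool)
    (h : IsUSO Φ) (t : Fin n → Bool) (ht : ∀ i, Φ t i = true)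
    (v : Fin n → Bool) (k : ℕ)
    (hk : k = (Finset.univ.filter (fun i => v i ≠ t i)).card) :
    ∃ p : ℕ → (Fin n → Bool),
      p 0 = v ∧ p k = t ∧ ∀ m < k, Step Φ (p m) (p (m + 1)) := by
  induction k generalizing v with
  | zero =>
    have hv : v = t := by
      funext j
      by_contra hj
      have hmem : j ∈ Finset.univ.filter (fun i => v i ≠ t i) := by
        simp [hj]
      have := Finset.card_pos.mpr ⟨j, hmem⟩
      omega
    exact ⟨fun _ => t, by simp [hv], rfl, by omega⟩
  | succ k ih =>
    set C := Finset.univ.filter (fun i => v i ≠ t i) with hC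
    have hvC : InSubcube t C v := by
      intro j hj
      have : ¬ (v j ≠ t j) := by simpa [hC] using hj
      simpa using this
    obtain ⟨w, ⟨hw1, hw2⟩, huniq⟩ := h.2 t C
    have hwt : t = w := huniq t ⟨fun j _ => rfl, fun i _ => ht i⟩
    have hvt : v ≠ t := by
      intro e
      subst e
      have : C = ∅ := by
        ext j; simp [hC]
      rw [this] at hk
      simp at hk
    have hex : ∃ i ∈ C, Φ v i = false := by
      by_contra hno
      push_neg at hno
      have hsink : ∀ i ∈ C, Φ v i = true := by
        intro i hi
        cases hΦ : Φ v i with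
        | false => exact absurd hΦ (hno i hi)
        | true => rfl
      have : v = w := huniq v ⟨hvC, hsink⟩
      exact hvt (this.trans hwt.symm)
    obtain ⟨i, hiC, hΦi⟩ := hex
    have hit : v i ≠ t i := by simpa [hC] using hiC
    have hdiff : Finset.univ.filter (fun j => cflip v i j ≠ t j) = C.erase i := by
      ext j
      by_cases hji : j = i
      · subst hji
        simp only [Finset.mem_filter, Finset.mem_univ, true_and, Finset.mem_erase]
        constructor
        · intro hc
          exfalso
          apply hc
          simp only [cflip, if_pos rfl]
          revert hit; cases v j <;> cases t j <;> simp
        · intro hc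
          exact absurd rfl hc.1
      · simp only [Finset.mem_filter, Finset.mem_univ, true_and, Finset.mem_erase, hC]
        simp only [cflip, if_neg hji]
        tauto
    have hcard : k = (Finset.univ.filter (fun j => cflip v i j ≠ t j)).card := by
      rw [hdiff, Finset.card_erase_of_mem hiC, ← hk]; omega
    obtain ⟨p, hp0, hpk, hps⟩ := ih (cflip v i) hcard
    refine ⟨fun m => if m = 0 then v else p (m - 1), by simp, by simpa using hpk, ?_⟩
    intro m hm
    cases m with
    | zero =>
      simpa [hp0] using ⟨i, hΦi, rfl⟩
    | succ m =>
      simpa using hps m (by omega)
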